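/- Let U be a random variable uniformly distributed on [0,1], let f : [0,1] → ℝ be monotone (say nondecreasing) and square integrable. Then Cov(f(U), f(1−U)) ≤ 0, so the antithetic estimator (f(U) + f(1−U))/2 has variance at most Var(f(U))/2. -/

import Mathlib

open MeasureTheory ProbabilityTheory Set

lemma aux_integrable_mul_of_memL2 {α : Type*} [MeasurableSpace α] {μ : Measure α}
    {g h : α → ℝ} (hg : MemLp g 2 μ) (hh : MemLp h 2 μ) :
    Integrable (fun x => g x * h x) μ := by
  have h1 : MemLp (g • h) 1 μ := hh.smul hg
  rw [← memLp_one_iff_integrable]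
  simpa [smul_eq_mul, Pi.mul_def] using h1

/-- Chebyshev-type correlation inequality: a nondecreasing and a nonincreasing function
are negatively correlated. -/
lemma aux_chebyshev {μ : Measure ℝ} [IsProbabilityMeasure μ]
    {g h : ℝ → ℝ} (hg : Monotone g) (hh : Antitone h)
    (hg2 : MemLp g 2 μ) (hh2 : MemLp h 2 μ) :
    ∫ x, g x * h x ∂μ ≤ (∫ x, g x ∂μ) * (∫ x, h x ∂μ) := by
  have hgi : Integrable g μ := hg2.integrable one_le_two
  have hhi : Integrable h μ := hh2.integrable one_le_two
  have hghi : Integrable (fun x => g x * h x) μ := aux_integrable_mul_of_memL2 hg2 hh2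
  have key : ∫ p : ℝ × ℝ, (g p.1 - g p.2) * (h p.1 - h p.2) ∂(μ.prod μ) ≤ 0 := by
    apply integral_nonpos
    intro p
    rcases le_total p.1 p.2 with hle | hle
    · exact mul_nonpos_of_nonpos_of_nonneg (sub_nonpos.2 (hg hle)) (sub_nonneg.2 (hh hle))
    · exact mul_nonpos_of_nonneg_of_nonpos (sub_nonneg.2 (hg hle)) (sub_nonpos.2 (hh hle))
  have hA : Integrable (fun p : ℝ × ℝ => g p.1 * h p.1) (μ.prod μ) := by
    have := hghi.mul_prod (integrable_const (1 : ℝ)) (μ := μ) (ν := μ)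
    simpa using this
  have hD : Integrable (fun p : ℝ × ℝ => g p.2 * h p.2) (μ.prod μ) := by
    have := (integrable_const (1 : ℝ)).mul_prod hghi (μ := μ) (ν := μ)
    simpa using this
  have hB : Integrable (fun p : ℝ × ℝ => g p.1 * h p.2) (μ.prod μ) := hgi.mul_prod hhi
  have hC : Integrable (fun p : ℝ × ℝ => g p.2 * h p.1) (μ.prod μ) := by
    have := hhi.mul_prod hgi (μ := μ) (ν := μ)
    simpa [mul_comm] using this
  have hAD : Integrable (fun p : ℝ × ℝ => g p.1 * h p.1 + g p.2 * h p.2) (μ.prod μ) :=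
    hA.add hD
  have hBC : Integrable (fun p : ℝ × ℝ => g p.1 * h p.2 + g p.2 * h p.1) (μ.prod μ) :=
    hB.add hC
  have iA : ∫ p : ℝ × ℝ, g p.1 * h p.1 ∂(μ.prod μ) = ∫ x, g x * h x ∂μ := by
    have := integral_prod_mul (μ := μ) (ν := μ) (fun x => g x * h x) (fun _ => (1 : ℝ))
    simpa using this
  have iD : ∫ p : ℝ × ℝ, g p.2 * h p.2 ∂(μ.prod μ) = ∫ x, g x * h x ∂μ := by
    have := integral_prod_mul (μ := μ) (ν := μ) (fun _ => (1 : ℝ)) (fun x => g x * h x)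
    simpa using this
  have iB : ∫ p : ℝ × ℝ, g p.1 * h p.2 ∂(μ.prod μ) = (∫ x, g x ∂μ) * ∫ x, h x ∂μ :=
    integral_prod_mul (μ := μ) (ν := μ) g h
  have iC : ∫ p : ℝ × ℝ, g p.2 * h p.1 ∂(μ.prod μ) = (∫ x, g x ∂μ) * ∫ x, h x ∂μ := by
    have := integral_prod_mul (μ := μ) (ν := μ) h g
    rw [mul_comm] at this
    rw [← this]
    congr 1
    funext p
    ring
  have expand : (fun p : ℝ × ℝ => (g p.1 - g p.2) * (h p.1 - h p.2))
      = (fun p : ℝ × ℝ => (g p.1 * h p.1 + g p.2 * h p.2)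
          - (g p.1 * h p.2 + g p.2 * h p.1)) := by
    funext p; ring
  rw [expand, integral_sub hAD hBC, integral_add hA hD,
    integral_add hB hC, iA, iB, iC, iD] at key
  linarith

/-- For `U` uniform on `[0,1]` and `f` nondecreasing with `f(U) ∈ L²`, the antithetic
covariance `Cov(f(U), f(1-U))` is nonpositive, so the antithetic estimator
`(f(U) + f(1-U))/2` has variance at most `Var(f(U))/2`. -/
theorem antithetic_monotone_cov_nonpos
    {Ω : Type*} [MeasureSpace Ω] [IsProbabilityMeasure (ℙ : Measure Ω)]
    (U : Ω → ℝ) (hU : Measurable U)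
    (hunif : Measure.map U (ℙ : Measure Ω) = volume.restrict (Icc (0:ℝ) 1))
    (f : ℝ → ℝ) (hf : Monotone f)
    (hL2 : MemLp (fun ω => f (U ω)) 2 ℙ) :
    (∫ ω, f (U ω) * f (1 - U ω) ∂ℙ)
      - (∫ ω, f (U ω) ∂ℙ) * (∫ ω, f (1 - U ω) ∂ℙ) ≤ 0 ∧
    variance (fun ω => (f (U ω) + f (1 - U ω)) / 2) ℙ
      ≤ variance (fun ω => f (U ω)) ℙ / 2 := by
  have hfm : Measurable f := hf.measurable
  set μ : Measure ℝ := volume.restrict (Icc (0:ℝ) 1) with hμ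
  haveI : IsProbabilityMeasure μ := ⟨by simp [hμ, Real.volume_Icc]⟩
  set T : ℝ → ℝ := fun x => 1 - x with hTdef
  have hT : Measurable T := measurable_const.sub measurable_id
  have hfT : Measurable (fun x => f (T x)) := hfm.comp hT
  have hfmul : Measurable (fun x => f x * f (T x)) := hfm.mul hfT
  have hpre : T ⁻¹' Icc (0:ℝ) 1 = Icc (0:ℝ) 1 := by
    ext x
    simp only [mem_preimage, mem_Icc, hTdef]
    constructor <;> rintro ⟨h1, h2⟩ <;> constructor <;> linarith
  have hmapT : Measure.map T μ = μ := by
    rw [hμ]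
    conv_lhs => rw [← hpre]
    rw [← Measure.restrict_map hT measurableSet_Icc]
    congr 1
    exact (Measure.measurePreserving_sub_left volume 1).map_eq
  have hg2 : MemLp f 2 μ := by
    rw [← hunif]
    exact (memLp_map_measure_iff hfm.aestronglyMeasurable hU.aemeasurable).mpr hL2
  have hh2 : MemLp (fun x => f (T x)) 2 μ := by
    have h1 : MemLp f 2 (Measure.map T μ) := hmapT.symm ▸ hg2
    exact (memLp_map_measure_iff hfm.aestronglyMeasurable hT.aemeasurable).mp h1
  have hhanti : Antitone (fun x => f (T x)) := fun x y hxy => hf (by simp [hTdef]; linarith)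
  have cheb : ∫ x, f x * f (T x) ∂μ ≤ (∫ x, f x ∂μ) * ∫ x, f (T x) ∂μ :=
    aux_chebyshev hf hhanti hg2 hh2
  have hmapU : Measure.map U (ℙ : Measure Ω) = μ := hunif
  have I1 : ∫ ω, f (U ω) * f (1 - U ω) ∂ℙ = ∫ x, f x * f (T x) ∂μ := by
    rw [← hmapU]
    exact (integral_map hU.aemeasurable hfmul.aestronglyMeasurable).symm
  have I2 : ∫ ω, f (U ω) ∂ℙ = ∫ x, f x ∂μ := by
    rw [← hmapU]
    exact (integral_map hU.aemeasurable hfm.aestronglyMeasurable).symm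
  have I3 : ∫ ω, f (1 - U ω) ∂ℙ = ∫ x, f (T x) ∂μ := by
    rw [← hmapU]
    exact (integral_map hU.aemeasurable hfT.aestronglyMeasurable).symm
  have I3' : ∫ x, f (T x) ∂μ = ∫ x, f x ∂μ := by
    conv_rhs => rw [← hmapT]
    exact (integral_map hT.aemeasurable hfm.aestronglyMeasurable).symm
  have Isq : ∫ ω, f (1 - U ω) ^ 2 ∂ℙ = ∫ x, f x ^ 2 ∂μ := by
    have h1 : ∫ ω, f (1 - U ω) ^ 2 ∂ℙ = ∫ x, f (T x) ^ 2 ∂μ := by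
      rw [← hmapU]
      exact (integral_map hU.aemeasurable (hfT.pow_const 2).aestronglyMeasurable).symm
    have h2 : ∫ x, f (T x) ^ 2 ∂μ = ∫ x, f x ^ 2 ∂μ := by
      conv_rhs => rw [← hmapT]
      exact (integral_map hT.aemeasurable (hfm.pow_const 2).aestronglyMeasurable).symm
    rw [h1, h2]
  have Ixsq : ∫ ω, f (U ω) ^ 2 ∂ℙ = ∫ x, f x ^ 2 ∂μ := by
    rw [← hmapU]
    exact (integral_map hU.aemeasurable (hfm.pow_const 2).aestronglyMeasurable).symm
  have cov_le : (∫ ω, f (U ω) * f (1 - U ω) ∂ℙ)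
      - (∫ ω, f (U ω) ∂ℙ) * (∫ ω, f (1 - U ω) ∂ℙ) ≤ 0 := by
    rw [I1, I2, I3]
    linarith
  refine ⟨cov_le, ?_⟩
  have hX2 : MemLp (fun ω => f (U ω)) 2 ℙ := hL2
  have hY2 : MemLp (fun ω => f (1 - U ω)) 2 ℙ := by
    have h1 : MemLp (fun x => f (T x)) 2 (Measure.map U ℙ) := hmapU.symm ▸ hh2
    exact (memLp_map_measure_iff hfT.aestronglyMeasurable hU.aemeasurable).mp h1
  have hXi : Integrable (fun ω => f (U ω)) ℙ := hX2.integrable one_le_two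
  have hYi : Integrable (fun ω => f (1 - U ω)) ℙ := hY2.integrable one_le_two
  have hXYi : Integrable (fun ω => f (U ω) * f (1 - U ω)) ℙ :=
    aux_integrable_mul_of_memL2 hX2 hY2
  have hXYi2 : Integrable (fun ω => 2 * (f (U ω) * f (1 - U ω))) ℙ := hXYi.const_mul 2
  have hXsqi : Integrable (fun ω => f (U ω) ^ 2) ℙ := hX2.integrable_sq
  have hYsqi : Integrable (fun ω => f (1 - U ω) ^ 2) ℙ := hY2.integrable_sq
  have hsum2 : Integrable (fun ω => 2 * (f (U ω) * f (1 - U ω)) + f (1 - U ω) ^ 2) ℙ :=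
    hXYi2.add hYsqi
  have hZ2 : MemLp (fun ω => (f (U ω) + f (1 - U ω)) / 2) 2 ℙ := by
    have := (hX2.add hY2).const_mul (2⁻¹ : ℝ)
    have heq : (fun ω => (f (U ω) + f (1 - U ω)) / 2)
        = fun ω => (2⁻¹ : ℝ) * (f (U ω) + f (1 - U ω)) := by
      funext ω; ring
    rw [heq]
    exact this
  have vX : variance (fun ω => f (U ω)) ℙ
      = (∫ ω, f (U ω) ^ 2 ∂ℙ) - (∫ ω, f (U ω) ∂ℙ) ^ 2 := by
    rw [variance_eq_sub hX2]; rfl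
  have vZ : variance (fun ω => (f (U ω) + f (1 - U ω)) / 2) ℙ
      = (∫ ω, ((f (U ω) + f (1 - U ω)) / 2) ^ 2 ∂ℙ)
        - (∫ ω, (f (U ω) + f (1 - U ω)) / 2 ∂ℙ) ^ 2 := by
    rw [variance_eq_sub hZ2]; rfl
  have e1 : ∫ ω, (f (U ω) + f (1 - U ω)) / 2 ∂ℙ
      = ((∫ ω, f (U ω) ∂ℙ) + ∫ ω, f (1 - U ω) ∂ℙ) / 2 := by
    rw [integral_div, integral_add hXi hYi]
  have e2 : ∫ ω, ((f (U ω) + f (1 - U ω)) / 2) ^ 2 ∂ℙ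
      = ((∫ ω, f (U ω) ^ 2 ∂ℙ) + 2 * (∫ ω, f (U ω) * f (1 - U ω) ∂ℙ)
          + ∫ ω, f (1 - U ω) ^ 2 ∂ℙ) / 4 := by
    have heq : (fun ω => ((f (U ω) + f (1 - U ω)) / 2) ^ 2)
        = fun ω => (f (U ω) ^ 2 + (2 * (f (U ω) * f (1 - U ω)) + f (1 - U ω) ^ 2)) / 4 := by
      funext ω; ring
    rw [heq, integral_div, integral_add hXsqi hsum2, integral_add hXYi2 hYsqi,
      integral_const_mul]
    ring
  rw [vZ, vX, e1, e2]
  have mY : ∫ ω, f (1 - U ω) ∂ℙ = ∫ ω, f (U ω) ∂ℙ := by rw [I3, I3', ← I2]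
  have mY2 : ∫ ω, f (1 - U ω) ^ 2 ∂ℙ = ∫ ω, f (U ω) ^ 2 ∂ℙ := by rw [Isq, ← Ixsq]
  rw [mY, mY2]
  have covP : (∫ ω, f (U ω) * f (1 - U ω) ∂ℙ) ≤ (∫ ω, f (U ω) ∂ℙ) ^ 2 := by
    have h := cov_le
    rw [mY] at h
    rw [sq]
    linarith
  have hsq : (((∫ ω, f (U ω) ∂ℙ) + ∫ ω, f (U ω) ∂ℙ) / 2) ^ 2
      = (∫ ω, f (U ω) ∂ℙ) ^ 2 := by ring
  rw [hsq]
  linarith
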